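/- Under the stated setup and algorithmic hypotheses, the sequence (A^k, Z^k, H^k) has at least one limit point; that is, there exist matrices A* , Z* ∈ ℝ^{n×n}, H* ∈ ℝ^{k×n} and a strictly increasing sequence of indices k_j such that A^{k_j} → A*, Z^{k_j} → Z*, and H^{k_j} → H* as j → ∞, and moreover Z* ∈ S₁ and H* ∈ S₂. -/

import Mathlib

open Matrix BigOperators Filter Topology

/-- Frobenius norm of a real matrix. -/
noncomputable def frob {m n : ℕ} (W : Matrix (Fin m) (Fin n) ℝ) : ℝ :=
  Real.sqrt (∑ i, ∑ j, (W i j) ^ 2)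

/-- Laplacian `L_S = D_S - (|S| + |S|ᵀ)/2` of a square real matrix `S`. -/
noncomputable def lap {n : ℕ} (S : Matrix (Fin n) (Fin n) ℝ) : Matrix (Fin n) (Fin n) ℝ :=
  Matrix.diagonal (fun i => ∑ j, (|S i j| + |S j i|) / 2)
    - (1 / 2 : ℝ) • (S.map (fun x => |x|) + (S.map (fun x => |x|))ᵀ)

/-- The objective `f(A, Z, H)` of the penalized DGSL model. -/
noncomputable def fObj {n k d : ℕ} (X : Matrix (Fin d) (Fin n) ℝ)
    (W M C : Matrix (Fin n) (Fin n) ℝ) (lam lamZ lamM a1 a2 : ℝ)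
    (A Z : Matrix (Fin n) (Fin n) ℝ) (H : Matrix (Fin k) (Fin n) ℝ) : ℝ :=
  (1 / 2) * frob (X - X * A) ^ 2 + (lam / 2) * frob (A - Z) ^ 2
    + lamZ * (∑ i, ∑ j, |Z i j|)
    + a1 * trace (H * lap Z * Hᵀ) / trace (H * lap C * Hᵀ)
    + a2 * trace (H * (lap W + lamM • lap M) * Hᵀ) / trace (H * lap C * Hᵀ)

lemma quad_nonneg {n : ℕ} (S : Matrix (Fin n) (Fin n) ℝ) (x : Fin n → ℝ) :
    0 ≤ ∑ i, ∑ j, x i * lap S i j * x j := by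
  set a : Fin n → Fin n → ℝ := fun i j => (|S i j| + |S j i|) / 2 with ha
  have hsym : ∀ i j, a i j = a j i := fun i j => by simp only [ha]; ring
  have hnn : ∀ i j, 0 ≤ a i j := fun i j => by positivity
  have hl : ∀ i j, lap S i j = (if i = j then ∑ m, a i m else 0) - a i j := by
    intro i j
    simp only [lap, Matrix.sub_apply, Matrix.diagonal_apply, Matrix.smul_apply,
      Matrix.add_apply, Matrix.map_apply, Matrix.transpose_apply, smul_eq_mul, ha]
    congr 1
    ring
  have key : ∑ i, ∑ j, x i * lap S i j * x j
      = (1/2) * ∑ i, ∑ j, a i j * (x i - x j)^2 := by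
    have e1 : ∑ i, ∑ j, x i * lap S i j * x j
        = (∑ i, ∑ j, a i j * x i ^ 2) - ∑ i, ∑ j, x i * a i j * x j := by
      have hterm : ∀ i j, x i * lap S i j * x j
          = x i * (if i = j then ∑ m, a i m else 0) * x j - x i * a i j * x j := by
        intro i j; rw [hl]; ring
      simp_rw [hterm, Finset.sum_sub_distrib]
      congr 1
      refine Finset.sum_congr rfl fun i _ => ?_
      have : ∑ j, x i * (if i = j then (∑ m, a i m) else 0) * x j
          = x i * (∑ m, a i m) * x i := by
        simp [mul_ite, ite_mul, Finset.sum_ite_eq]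
      rw [this, Finset.mul_sum, Finset.sum_mul]
      exact Finset.sum_congr rfl fun j _ => by ring
    have hswap : ∑ i, ∑ j, a i j * x j ^ 2 = ∑ i, ∑ j, a i j * x i ^ 2 := by
      rw [Finset.sum_comm]
      exact Finset.sum_congr rfl fun i _ => Finset.sum_congr rfl fun j _ => by rw [hsym]
    have e2 : ∀ i j, a i j * (x i - x j)^2
        = a i j * x i ^ 2 + a i j * x j ^ 2 - 2 * (x i * a i j * x j) := by
      intro i j; ring
    rw [e1]
    simp_rw [e2, Finset.sum_sub_distrib, Finset.sum_add_distrib, hswap]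
    have h2 : ∑ i, ∑ j, 2 * (x i * a i j * x j)
        = 2 * ∑ i, ∑ j, x i * a i j * x j := by
      simp_rw [Finset.mul_sum]
    rw [h2]; ring
  rw [key]
  have : 0 ≤ ∑ i, ∑ j, a i j * (x i - x j)^2 :=
    Finset.sum_nonneg fun i _ => Finset.sum_nonneg fun j _ =>
      mul_nonneg (hnn i j) (sq_nonneg _)
  linarith

lemma trace_quad_nonneg {n k : ℕ} (S : Matrix (Fin n) (Fin n) ℝ)
    (H : Matrix (Fin k) (Fin n) ℝ) : 0 ≤ trace (H * lap S * Hᵀ) := by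
  have he : trace (H * lap S * Hᵀ) = ∑ l, ∑ i, ∑ j, H l i * lap S i j * H l j := by
    simp only [Matrix.trace, Matrix.diag, Matrix.mul_apply, Matrix.transpose_apply,
      Finset.sum_mul]
    refine Finset.sum_congr rfl fun l _ => ?_
    rw [Finset.sum_comm]
  rw [he]
  exact Finset.sum_nonneg fun l _ => quad_nonneg S (fun i => H l i)

lemma frob_nonneg {m n : ℕ} (W : Matrix (Fin m) (Fin n) ℝ) : 0 ≤ frob W :=
  Real.sqrt_nonneg _

lemma frob_sq {m n : ℕ} (W : Matrix (Fin m) (Fin n) ℝ) :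
    frob W ^ 2 = ∑ i, ∑ j, (W i j) ^ 2 :=
  Real.sq_sqrt (Finset.sum_nonneg fun i _ => Finset.sum_nonneg fun j _ => sq_nonneg _)

lemma frob_tendsto {m n : ℕ} {u : ℕ → Matrix (Fin m) (Fin n) ℝ}
    {L : Matrix (Fin m) (Fin n) ℝ} (h : Tendsto u atTop (𝓝 L)) :
    Tendsto (fun j => frob (u j - L)) atTop (𝓝 0) := by
  have h' : Tendsto (fun j => u j - L) atTop (𝓝 0) := by
    simpa using h.sub (tendsto_const_nhds (x := L))
  have hc : Continuous (frob : Matrix (Fin m) (Fin n) ℝ → ℝ) :=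
    Real.continuous_sqrt.comp (continuous_finset_sum _ fun i _ =>
      continuous_finset_sum _ fun j _ => (continuous_id.matrix_elem i j).pow 2)
  have := (hc.tendsto 0).comp h'
  simpa [frob, Function.comp_def] using this

attribute [local instance] Matrix.normedAddCommGroup Matrix.normedSpace

theorem dgsl_limit_point_exists (n k d : ℕ) (hn : 0 < n) (hk : 0 < k) (hd : 0 < d)
    (X : Matrix (Fin d) (Fin n) ℝ) (W M C : Matrix (Fin n) (Fin n) ℝ)
    (lam lamZ lamM a1 a2 : ℝ) (hlam : 0 < lam) (hlamZ : 0 < lamZ)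
    (hlamM : 0 < lamM) (ha1 : 0 < a1) (ha2 : 0 < a2)
    (hC : ∀ H : Matrix (Fin k) (Fin n) ℝ, H * Hᵀ = 1 → 0 < trace (H * lap C * Hᵀ))
    (Aseq Zseq : ℕ → Matrix (Fin n) (Fin n) ℝ)
    (Hseq : ℕ → Matrix (Fin k) (Fin n) ℝ)
    (hZ0 : ∀ i, Zseq 0 i i = 0) (hH0 : Hseq 0 * (Hseq 0)ᵀ = 1)
    (hHstep : ∀ t : ℕ, Hseq (t + 1) * (Hseq (t + 1))ᵀ = 1 ∧
      ∀ H : Matrix (Fin k) (Fin n) ℝ, H * Hᵀ = 1 →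
        fObj X W M C lam lamZ lamM a1 a2 (Aseq t) (Zseq t) (Hseq (t + 1))
          ≤ fObj X W M C lam lamZ lamM a1 a2 (Aseq t) (Zseq t) H)
    (hAstep : ∀ (t : ℕ) (A : Matrix (Fin n) (Fin n) ℝ),
      fObj X W M C lam lamZ lamM a1 a2 (Aseq (t + 1)) (Zseq t) (Hseq (t + 1))
        ≤ fObj X W M C lam lamZ lamM a1 a2 A (Zseq t) (Hseq (t + 1)))
    (hZstep : ∀ t : ℕ, (∀ i, Zseq (t + 1) i i = 0) ∧
      ∀ Z : Matrix (Fin n) (Fin n) ℝ, (∀ i, Z i i = 0) →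
        fObj X W M C lam lamZ lamM a1 a2 (Aseq (t + 1)) (Zseq (t + 1)) (Hseq (t + 1))
          ≤ fObj X W M C lam lamZ lamM a1 a2 (Aseq (t + 1)) Z (Hseq (t + 1))) :
    ∃ (Astar Zstar : Matrix (Fin n) (Fin n) ℝ) (Hstar : Matrix (Fin k) (Fin n) ℝ)
      (φ : ℕ → ℕ), StrictMono φ ∧
      Tendsto (fun j : ℕ => frob (Aseq (φ j) - Astar)) atTop (𝓝 0) ∧
      Tendsto (fun j : ℕ => frob (Zseq (φ j) - Zstar)) atTop (𝓝 0) ∧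
      Tendsto (fun j : ℕ => frob (Hseq (φ j) - Hstar)) atTop (𝓝 0) ∧
      (∀ i, Zstar i i = 0) ∧ Hstar * Hstarᵀ = 1 := by
  set f := fObj X W M C lam lamZ lamM a1 a2 with hf
  set F : ℕ → ℝ := fun t => f (Aseq t) (Zseq t) (Hseq t) with hF
  -- feasibility
  have hHfeas : ∀ t, Hseq t * (Hseq t)ᵀ = 1 := by
    intro t; cases t with
    | zero => exact hH0
    | succ t => exact (hHstep t).1
  have hZfeas : ∀ t i, Zseq t i i = 0 := by
    intro t; cases t with
    | zero => exact hZ0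
    | succ t => exact (hZstep t).1
  -- descent
  have hdec : ∀ t, F (t + 1) ≤ F t := by
    intro t
    calc F (t + 1) ≤ f (Aseq (t+1)) (Zseq t) (Hseq (t+1)) := (hZstep t).2 (Zseq t) (hZfeas t)
      _ ≤ f (Aseq t) (Zseq t) (Hseq (t+1)) := hAstep t (Aseq t)
      _ ≤ F t := (hHstep t).2 (Hseq t) (hHfeas t)
  have hFB : ∀ t, F t ≤ F 0 := fun t => antitone_nat_of_succ_le hdec (Nat.zero_le t)
  -- decomposition of F t into nonneg pieces
  have hterms : ∀ t, lamZ * (∑ i, ∑ j, |Zseq t i j|) ≤ F 0 ∧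
      (lam / 2) * frob (Aseq t - Zseq t) ^ 2 ≤ F 0 ∧ 0 ≤ F 0 := by
    intro t
    have hc : 0 < trace (Hseq t * lap C * (Hseq t)ᵀ) := hC _ (hHfeas t)
    have h1 : 0 ≤ (1/2 : ℝ) * frob (X - X * Aseq t) ^ 2 := by
      have := frob_nonneg (X - X * Aseq t); positivity
    have h2 : 0 ≤ (lam / 2) * frob (Aseq t - Zseq t) ^ 2 := by
      have := frob_nonneg (Aseq t - Zseq t); positivity
    have h3 : 0 ≤ lamZ * (∑ i, ∑ j, |Zseq t i j|) :=
      mul_nonneg hlamZ.le (Finset.sum_nonneg fun i _ =>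
        Finset.sum_nonneg fun j _ => abs_nonneg _)
    have h4 : 0 ≤ a1 * trace (Hseq t * lap (Zseq t) * (Hseq t)ᵀ)
        / trace (Hseq t * lap C * (Hseq t)ᵀ) :=
      div_nonneg (mul_nonneg ha1.le (trace_quad_nonneg _ _)) hc.le
    have h5 : 0 ≤ a2 * trace (Hseq t * (lap W + lamM • lap M) * (Hseq t)ᵀ)
        / trace (Hseq t * lap C * (Hseq t)ᵀ) := by
      refine div_nonneg (mul_nonneg ha2.le ?_) hc.le
      have : Hseq t * (lap W + lamM • lap M) * (Hseq t)ᵀ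
          = Hseq t * lap W * (Hseq t)ᵀ + lamM • (Hseq t * lap M * (Hseq t)ᵀ) := by
        rw [Matrix.mul_add, Matrix.add_mul, Matrix.mul_smul, Matrix.smul_mul]
      rw [this, Matrix.trace_add, Matrix.trace_smul]
      exact add_nonneg (trace_quad_nonneg _ _)
        (smul_nonneg hlamM.le (trace_quad_nonneg _ _))
    have hFt : F t = (1/2 : ℝ) * frob (X - X * Aseq t) ^ 2
        + (lam / 2) * frob (Aseq t - Zseq t) ^ 2
        + lamZ * (∑ i, ∑ j, |Zseq t i j|)
        + a1 * trace (Hseq t * lap (Zseq t) * (Hseq t)ᵀ)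
            / trace (Hseq t * lap C * (Hseq t)ᵀ)
        + a2 * trace (Hseq t * (lap W + lamM • lap M) * (Hseq t)ᵀ)
            / trace (Hseq t * lap C * (Hseq t)ᵀ) := rfl
    have hFt0 := hFB t
    refine ⟨by linarith [hFt0, hFt ▸ hFt0], by linarith, ?_⟩
    have h0 : 0 ≤ F t := by rw [hFt]; linarith
    linarith
  obtain ⟨-, -, hB0⟩ := hterms 0
  set B := F 0 with hB
  -- entrywise bounds
  have hZb : ∀ t i j, |Zseq t i j| ≤ B / lamZ := by
    intro t i j
    have h := (hterms t).1
    have hsum : (∑ i, ∑ j, |Zseq t i j|) ≤ B / lamZ := by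
      rw [le_div_iff₀ hlamZ]; linarith [h]
    refine le_trans (le_trans ?_ (Finset.single_le_sum
      (f := fun j => |Zseq t i j|) (fun j _ => abs_nonneg _) (Finset.mem_univ j))) ?_
    · exact le_refl _
    · exact le_trans (Finset.single_le_sum (f := fun i => ∑ j, |Zseq t i j|)
        (fun i _ => Finset.sum_nonneg fun j _ => abs_nonneg _) (Finset.mem_univ i)) hsum
  have hAb : ∀ t i j, |Aseq t i j| ≤ B / lamZ + Real.sqrt (2 * B / lam) := by
    intro t i j
    have h := (hterms t).2.1
    have hsq : (Aseq t i j - Zseq t i j) ^ 2 ≤ 2 * B / lam := by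
      have hs : frob (Aseq t - Zseq t) ^ 2 ≤ 2 * B / lam := by
        rw [le_div_iff₀ hlam]; linarith [h]
      refine le_trans ?_ hs
      rw [frob_sq]
      have h1 : ((Aseq t - Zseq t) i j) ^ 2 ≤ ∑ j', ((Aseq t - Zseq t) i j') ^ 2 :=
        Finset.single_le_sum (f := fun j' => ((Aseq t - Zseq t) i j') ^ 2)
          (fun _ _ => sq_nonneg _) (Finset.mem_univ j)
      have h2 : (∑ j', ((Aseq t - Zseq t) i j') ^ 2)
          ≤ ∑ i', ∑ j', ((Aseq t - Zseq t) i' j') ^ 2 :=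
        Finset.single_le_sum (f := fun i' => ∑ j', ((Aseq t - Zseq t) i' j') ^ 2)
          (fun _ _ => Finset.sum_nonneg fun _ _ => sq_nonneg _) (Finset.mem_univ i)
      simpa [Matrix.sub_apply] using le_trans h1 h2
    have habs : |Aseq t i j - Zseq t i j| ≤ Real.sqrt (2 * B / lam) := by
      rw [← Real.sqrt_sq_eq_abs]
      exact Real.sqrt_le_sqrt hsq
    calc |Aseq t i j| = |(Aseq t i j - Zseq t i j) + Zseq t i j| := by ring_nf
      _ ≤ |Aseq t i j - Zseq t i j| + |Zseq t i j| := abs_add_le _ _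
      _ ≤ Real.sqrt (2 * B / lam) + B / lamZ := add_le_add habs (hZb t i j)
      _ = B / lamZ + Real.sqrt (2 * B / lam) := by ring
  have hHb : ∀ t (i : Fin k) (j : Fin n), |Hseq t i j| ≤ 1 := by
    intro t i j
    have h1 : (Hseq t * (Hseq t)ᵀ) i i = 1 := by rw [hHfeas t]; simp
    have h2 : ∑ j', Hseq t i j' * Hseq t i j' = 1 := by
      simpa [Matrix.mul_apply, Matrix.transpose_apply] using h1
    have h3 : Hseq t i j ^ 2 ≤ 1 := by
      rw [← h2, sq]
      exact Finset.single_le_sum (f := fun j' => Hseq t i j' * Hseq t i j')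
        (fun j' _ => mul_self_nonneg _) (Finset.mem_univ j)
    nlinarith [abs_nonneg (Hseq t i j), sq_abs (Hseq t i j)]
  -- compactness
  set R : ℝ := max (max (B / lamZ + Real.sqrt (2 * B / lam)) (B / lamZ)) 1 with hR
  have hR0 : (0 : ℝ) ≤ R := le_trans zero_le_one (le_max_right _ _)
  set E := (Matrix (Fin n) (Fin n) ℝ × Matrix (Fin n) (Fin n) ℝ) × Matrix (Fin k) (Fin n) ℝ
    with hE
  set u : ℕ → E := fun t => ((Aseq t, Zseq t), Hseq t) with hu
  have hmem : ∀ t, u t ∈ Metric.closedBall (0 : E) R := by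
    intro t
    rw [Metric.mem_closedBall, dist_zero_right]
    refine max_le (max_le ?_ ?_) ?_
    · rw [Matrix.norm_le_iff hR0]
      intro i j
      rw [Real.norm_eq_abs]
      exact le_trans (hAb t i j) (le_trans (le_max_left _ _) (le_max_left _ _))
    · rw [Matrix.norm_le_iff hR0]
      intro i j
      rw [Real.norm_eq_abs]
      exact le_trans (hZb t i j) (le_trans (le_max_right _ _) (le_max_left _ _))
    · rw [Matrix.norm_le_iff hR0]
      intro i j
      rw [Real.norm_eq_abs]
      exact le_trans (hHb t i j) (le_max_right _ _)
  obtain ⟨p, -, φ, hφ, hconv⟩ :=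
    (isCompact_closedBall (0 : E) R).tendsto_subseq hmem
  have hAconv : Tendsto (fun j => Aseq (φ j)) atTop (𝓝 p.1.1) :=
    ((continuous_fst.comp continuous_fst).tendsto p).comp hconv
  have hZconv : Tendsto (fun j => Zseq (φ j)) atTop (𝓝 p.1.2) :=
    ((continuous_snd.comp continuous_fst).tendsto p).comp hconv
  have hHconv : Tendsto (fun j => Hseq (φ j)) atTop (𝓝 p.2) :=
    (continuous_snd.tendsto p).comp hconv
  refine ⟨p.1.1, p.1.2, p.2, φ, hφ, frob_tendsto hAconv, frob_tendsto hZconv,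
    frob_tendsto hHconv, ?_, ?_⟩
  · intro i
    have h1 : Tendsto (fun j => Zseq (φ j) i i) atTop (𝓝 (p.1.2 i i)) :=
      ((continuous_id.matrix_elem i i).tendsto p.1.2).comp hZconv
    have h2 : Tendsto (fun j => Zseq (φ j) i i) atTop (𝓝 0) := by
      simpa [hZfeas] using tendsto_const_nhds (x := (0:ℝ)) (f := atTop (α := ℕ))
    exact tendsto_nhds_unique h1 h2
  · have h1 : Tendsto (fun j => Hseq (φ j) * (Hseq (φ j))ᵀ) atTop (𝓝 (p.2 * p.2ᵀ)) :=
      ((continuous_id.matrix_mul continuous_id.matrix_transpose).tendsto p.2).comp hHconv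
    have h2 : Tendsto (fun j => Hseq (φ j) * (Hseq (φ j))ᵀ) atTop (𝓝 1) := by
      simpa [hHfeas] using tendsto_const_nhds
        (x := (1 : Matrix (Fin k) (Fin k) ℝ)) (f := atTop (α := ℕ))
    exact tendsto_nhds_unique h1 h2
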